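/- arXiv:2502.02915 — 4 statements merged into one kernel-verified Lean document; each statement's English description precedes it below -/
import Mathlib

section
/- Let G be a graph, F a set of positively oriented edges of G, t ≥ 2, and α ∈ M_t(F). Then the number of circuits of length l on G whose abelianization mod t restricts to α on F equals (1/t^{|F|}) Σ_{γ ∈ M_t(F)} ε_t^{-⟨γ,α⟩} trace(W_{1,γ}^l). -/
open Finset Matrix

variable {V E : Type}

/-- Initial vertex of an oriented edge `(e, b)`; `b = true` means positively oriented. -/
def einit (vs vt : E → V) (a : E × Bool) : V := if a.2 then vs a.1 else vt a.1

/-- Terminal vertex of an oriented edge. -/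
def eterm (vs vt : E → V) (a : E × Bool) : V := if a.2 then vt a.1 else vs a.1

/-- Inverse (opposite) oriented edge. -/
def einv (a : E × Bool) : E × Bool := (a.1, !a.2)

/-- A closed walk of length `l` on the multigraph, recorded cyclically. -/
abbrev IsClosedWalk (vs vt : E → V) {l : ℕ} (a : ZMod l → E × Bool) : Prop :=
  ∀ i, eterm vs vt (a i) = einit vs vt (a (i + 1))

/-- A circuit: a closed walk without backtracks or tail. -/
abbrev IsCircuit (vs vt : E → V) {l : ℕ} (a : ZMod l → E × Bool) : Prop :=
  IsClosedWalk vs vt a ∧ ∀ i, a (i + 1) ≠ einv (a i)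

/-- The abelianization of a closed walk, as an integer vector over edges. -/
def abel [Fintype E] [DecidableEq E] {l : ℕ} [NeZero l]
    (a : ZMod l → E × Bool) (e : E) : ℤ :=
  ∑ i : ZMod l, if (a i).1 = e then (if (a i).2 then (1 : ℤ) else -1) else 0

/-- The vertex adjacency matrix (counting oriented edges from `v` to `w`). -/
def vertAdj [Fintype E] [DecidableEq V] (vs vt : E → V) : Matrix V V ℕ :=
  Matrix.of fun v w =>
    (univ.filter fun a : E × Bool => einit vs vt a = v ∧ eterm vs vt a = w).card

/-- Oriented edge `a` feeds into `b`. -/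
abbrev Feeds (vs vt : E → V) (a b : E × Bool) : Prop :=
  b ≠ einv a ∧ eterm vs vt a = einit vs vt b

/-- The edge adjacency matrix `W₁`. -/
def edgeAdj [DecidableEq V] [DecidableEq E] (vs vt : E → V) :
    Matrix (E × Bool) (E × Bool) ℕ :=
  Matrix.of fun a b => if Feeds vs vt a b then 1 else 0

/-- `ε_t = exp(2πi/t)`, a primitive `t`-th root of unity. -/
noncomputable def zetat (t : ℕ) : ℂ := Complex.exp (2 * Real.pi * Complex.I / t)

/-- The signed exponent `⟨γ, 1·e⟩` of an oriented edge. -/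
def oexp {t : ℕ} (γ : E → ZMod t) (a : E × Bool) : ℤ :=
  if a.2 then ((γ a.1).val : ℤ) else -((γ a.1).val : ℤ)

/-- The twisted vertex adjacency matrix `A_γ`. -/
noncomputable def twistedVertAdj [Fintype E] [DecidableEq V] (vs vt : E → V)
    (t : ℕ) (γ : E → ZMod t) : Matrix V V ℂ :=
  Matrix.of fun v w =>
    ∑ a : E × Bool, if einit vs vt a = v ∧ eterm vs vt a = w then zetat t ^ oexp γ a else 0

/-- The twisted edge adjacency matrix `W_{1,γ}`. -/
noncomputable def twistedEdgeAdj [DecidableEq V] [DecidableEq E] (vs vt : E → V)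
    (t : ℕ) (γ : E → ZMod t) : Matrix (E × Bool) (E × Bool) ℂ :=
  Matrix.of fun a b => if Feeds vs vt a b then zetat t ^ oexp γ a else 0

/-- The twisted vertex adjacency matrix for `t = 2`, with `±1` entries. -/
noncomputable def twistedVertAdj2 [Fintype E] [DecidableEq V] (vs vt : E → V)
    (γ : E → ZMod 2) : Matrix V V ℂ :=
  Matrix.of fun v w =>
    ∑ a : E × Bool, if einit vs vt a = v ∧ eterm vs vt a = w then (-1 : ℂ) ^ (γ a.1).val else 0

/-- Extension by zero of an element of `M_t(F)` to all edges. -/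
def extF [DecidableEq E] {t : ℕ} (F : Finset E) (γ : {e : E // e ∈ F} → ZMod t) (e : E) :
    ZMod t := if h : e ∈ F then γ ⟨e, h⟩ else 0

/-- Extension by zero of an element of `M_t(E^c(T))` to all edges. -/
def extC [DecidableEq E] {t : ℕ} (T : Finset E) (γ : {e : E // e ∉ T} → ZMod t) (e : E) :
    ZMod t := if h : e ∈ T then 0 else γ ⟨e, h⟩

/-- Reachability using only edges from the set `F` (edges traversable both ways). -/
def Reach (vs vt : E → V) (F : Finset E) : V → V → Prop :=
  Relation.ReflTransGen (fun v w => ∃ e ∈ F, (vs e = v ∧ vt e = w) ∨ (vs e = w ∧ vt e = v))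

/-- Degree of a vertex (loops counted twice). -/
def degree [Fintype E] [DecidableEq V] (vs vt : E → V) (v : V) : ℕ :=
  (univ.filter fun e => vs e = v).card + (univ.filter fun e => vt e = v).card

/-- `α` is an `R`-circulation: balanced at every vertex. -/
def IsCirc [Fintype E] [DecidableEq V] (vs vt : E → V) {R : Type} [AddCommMonoid R]
    (α : E → R) : Prop :=
  ∀ v, ∑ e ∈ univ.filter (fun e => vs e = v), α e = ∑ e ∈ univ.filter (fun e => vt e = v), α e

/-- `T` is a spanning tree: its edges connect all vertices and `|T| = |V| - 1`. -/
def IsSpanningTree [Fintype V] (vs vt : E → V) (T : Finset E) : Prop :=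
  (∀ v w : V, Reach vs vt T v w) ∧ T.card + 1 = Fintype.card V

/-- The vertex-edge incidence matrix. -/
def incidence (R : Type) [Ring R] [DecidableEq V] (vs vt : E → V) : Matrix V E R :=
  Matrix.of fun v e => (if vs e = v then (1 : R) else 0) - (if vt e = v then 1 else 0)

/-- An Eulerian circuit: a closed walk using every edge exactly once. -/
abbrev IsEulerianCircuit [Fintype E] (vs vt : E → V) (a : ZMod (Fintype.card E) → E × Bool) :
    Prop :=
  IsClosedWalk vs vt a ∧ Function.Bijective (fun i => (a i).1)

/-- Eulerian circuits up to cyclic rotation (Eulerian cycles). -/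
def eulSetoid [Fintype E] (vs vt : E → V) :
    Setoid {a : ZMod (Fintype.card E) → E × Bool // IsEulerianCircuit vs vt a} where
  r a b := ∃ k, ∀ i, b.1 i = a.1 (i + k)
  iseqv := by
    refine ⟨fun a => ⟨0, fun i => by rw [add_zero]⟩, ?_, ?_⟩
    · rintro a b ⟨k, h⟩
      exact ⟨-k, fun i => by rw [h (i + -k), neg_add_cancel_right]⟩
    · rintro a b c ⟨k, h⟩ ⟨k', h'⟩
      exact ⟨k' + k, fun i => by rw [h' i, h (i + k'), add_assoc]⟩

instance [Fintype E] [DecidableEq E] [DecidableEq V] [NeZero (Fintype.card E)]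
    (vs vt : E → V) : DecidableRel (eulSetoid vs vt).r :=
  fun a b => inferInstanceAs (Decidable (∃ k, ∀ i, b.1 i = a.1 (i + k)))

instance [Fintype E] [DecidableEq E] [DecidableEq V] [NeZero (Fintype.card E)]
    (vs vt : E → V) : Fintype (Quotient (eulSetoid vs vt)) :=
  @Quotient.fintype _ _ (eulSetoid vs vt)
    (fun a b => inferInstanceAs (Decidable (∃ k, ∀ i, b.1 i = a.1 (i + k))))


section Aux

lemma zetat_prim (t : ℕ) [NeZero t] : IsPrimitiveRoot (zetat t) t :=
  Complex.isPrimitiveRoot_exp t (NeZero.ne t)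

lemma zetat_ne_zero (t : ℕ) : zetat t ≠ 0 := Complex.exp_ne_zero _

lemma zetat_zpow_congr (t : ℕ) [NeZero t] {a b : ℤ} (h : ((a : ZMod t) = (b : ZMod t))) :
    zetat t ^ a = zetat t ^ b := by
  have hm : a ≡ b [ZMOD (t : ℤ)] := (ZMod.intCast_eq_intCast_iff a b t).mp h
  have hd : (t : ℤ) ∣ a - b := (Int.ModEq.dvd hm.symm)
  have h1 : zetat t ^ (a - b) = 1 := by
    rw [(zetat_prim t).zpow_eq_one_iff_dvd]; exact_mod_cast hd
  have hz := zetat_ne_zero t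
  calc zetat t ^ a = zetat t ^ (b + (a - b)) := by ring_nf
    _ = zetat t ^ b * zetat t ^ (a - b) := zpow_add₀ hz _ _
    _ = zetat t ^ b := by rw [h1, mul_one]

lemma zpow_sum₀ {ι : Type*} {x : ℂ} (hx : x ≠ 0) (s : Finset ι) (f : ι → ℤ) :
    x ^ (∑ i ∈ s, f i) = ∏ i ∈ s, x ^ f i := by
  classical
  induction s using Finset.induction_on with
  | empty => simp
  | @insert _ _ h ih => rw [Finset.sum_insert h, Finset.prod_insert h, zpow_add₀ hx, ih]

lemma char_sum (t : ℕ) [NeZero t] (x : ZMod t) :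
    ∑ c : ZMod t, zetat t ^ (((c * x).val : ℤ)) = if x = 0 then (t : ℂ) else 0 := by
  have hz := zetat_ne_zero t
  have hterm : ∀ c : ZMod t, zetat t ^ (((c * x).val : ℤ)) = (zetat t ^ x.val) ^ c.val := by
    intro c
    have : zetat t ^ (((c * x).val : ℤ)) = zetat t ^ ((c.val * x.val : ℕ) : ℤ) := by
      apply zetat_zpow_congr
      push_cast [ZMod.natCast_val, ZMod.cast_id]
      ring
    rw [this, zpow_natCast, mul_comm, pow_mul]
  simp_rw [hterm]
  obtain ⟨m, rfl⟩ := Nat.exists_eq_succ_of_ne_zero (NeZero.ne t)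
  rw [show ∑ c : ZMod (m+1), (zetat (m+1) ^ x.val) ^ c.val
      = ∑ i ∈ Finset.range (m+1), (zetat (m+1) ^ x.val) ^ i from
    Fin.sum_univ_eq_sum_range (fun i => (zetat (m+1) ^ x.val) ^ i) (m+1)]
  by_cases hx : x = 0
  · simp [hx]
  · rw [if_neg hx]
    have hw1 : zetat (m+1) ^ x.val ≠ 1 := by
      intro h
      have hd := ((zetat_prim (m+1)).pow_eq_one_iff_dvd x.val).mp h
      have hlt : x.val < m + 1 := ZMod.val_lt x
      rcases Nat.eq_zero_or_pos x.val with h0 | h0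
      · exact hx (ZMod.val_eq_zero x |>.mp h0)
      · exact absurd (Nat.le_of_dvd h0 hd) (by omega)
    rw [geom_sum_eq hw1]
    have : (zetat (m+1) ^ x.val) ^ (m+1) = 1 := by
      rw [← pow_mul, mul_comm, pow_mul, (zetat_prim (m+1)).pow_eq_one, one_pow]
    rw [this, sub_self, zero_div]

def consf {n : Type*} {k : ℕ} (x : n) (a : Fin k → n) : Fin (k+1) → n := Fin.cons x a

@[simp] lemma consf_zero {n : Type*} {k : ℕ} (x : n) (a : Fin k → n) : consf x a 0 = x := rfl
@[simp] lemma consf_succ {n : Type*} {k : ℕ} (x : n) (a : Fin k → n) (i : Fin k) :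
    consf x a i.succ = a i := by simp [consf]

lemma pow_apply_walk {n : Type*} [Fintype n] [DecidableEq n] (M : Matrix n n ℂ) :
    ∀ (k : ℕ) (x y : n), (M ^ k) x y =
      ∑ a : Fin k → n, if consf x a (Fin.last k) = y
        then ∏ i : Fin k, M (consf x a i.castSucc) (consf x a i.succ) else 0 := by
  intro k
  induction k with
  | zero =>
    intro x y
    simp [Matrix.one_apply, Fin.last, consf]
  | succ k ih =>
    intro x y
    rw [pow_succ', Matrix.mul_apply]
    have := Equiv.sum_comp (Fin.consEquiv (fun _ : Fin (k+1) => n))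
      (fun a : Fin (k+1) → n => if consf x a (Fin.last (k+1)) = y
        then ∏ i : Fin (k+1), M (consf x a i.castSucc) (consf x a i.succ) else 0)
    rw [← this, Fintype.sum_prod_type]
    refine Finset.sum_congr rfl fun z _ => ?_
    rw [ih z y, Finset.mul_sum]
    refine Finset.sum_congr rfl fun a _ => ?_
    have hcons : ((Fin.consEquiv (fun _ : Fin (k+1) => n)) (z, a)) = consf z a := rfl
    rw [hcons]
    have hlast : consf x (consf z a) (Fin.last (k+1)) = consf z a (Fin.last k) := by
      rw [← Fin.succ_last, consf_succ]
    rw [hlast, mul_ite, mul_zero]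
    congr 1
    rw [Fin.prod_univ_succ]
    have e1 : consf x (consf z a) (Fin.castSucc 0) = x := by
      rw [Fin.castSucc_zero, consf_zero]
    have e2 : consf x (consf z a) (Fin.succ 0) = z := by rw [consf_succ, consf_zero]
    rw [e1, e2]
    congr 1

lemma fin_last_add_one (m : ℕ) : (Fin.last m) + 1 = 0 := by
  ext
  rw [Fin.add_def]
  cases m with
  | zero => decide
  | succ m => simp [Fin.val_last, Fin.val_one, Nat.mod_self]

lemma consf_castSucc_eq {n : Type*} {m : ℕ} (a : Fin (m+1) → n) (i : Fin (m+1)) :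
    consf (a (Fin.last m)) a i.castSucc = a (i - 1) := by
  induction i using Fin.cases with
  | zero =>
    have h0 : (0 : Fin (m+1)) - 1 = Fin.last m := by
      rw [sub_eq_iff_eq_add, eq_comm]
      exact fin_last_add_one m
    rw [Fin.castSucc_zero, consf_zero, h0]
  | succ j =>
    rw [← Fin.succ_castSucc, consf_succ]
    congr 1
    rw [eq_comm, sub_eq_iff_eq_add, Fin.coeSucc_eq_succ]

lemma trace_pow_walk {n : Type*} [Fintype n] [DecidableEq n] (M : Matrix n n ℂ) (m : ℕ) :
    Matrix.trace (M ^ (m+1)) = ∑ b : Fin (m+1) → n, ∏ i : Fin (m+1), M (b i) (b (i + 1)) := by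
  rw [Matrix.trace]
  simp only [Matrix.diag_apply]
  simp_rw [pow_apply_walk M (m+1)]
  have hL : ∀ (x : n) (a : Fin (m+1) → n), consf x a (Fin.last (m+1)) = a (Fin.last m) := by
    intro x a; rw [← Fin.succ_last, consf_succ]
  simp_rw [hL]
  rw [Finset.sum_comm]
  refine Finset.sum_congr rfl fun a _ => ?_
  rw [Finset.sum_ite_eq univ (a (Fin.last m))
    (fun x => ∏ i : Fin (m+1), M (consf x a i.castSucc) (consf x a i.succ)), if_pos (mem_univ _)]
  calc ∏ i : Fin (m+1), M (consf (a (Fin.last m)) a i.castSucc) (consf (a (Fin.last m)) a i.succ)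
      = ∏ i : Fin (m+1), M (a (i - 1)) (a i) := by
        refine Finset.prod_congr rfl fun i _ => ?_
        rw [consf_castSucc_eq, consf_succ]
    _ = ∏ i : Fin (m+1), M (a i) (a (i + 1)) := by
        rw [← Equiv.prod_comp (Equiv.addRight (1 : Fin (m+1)))
          (fun i => M (a (i - 1)) (a i))]
        refine Finset.prod_congr rfl fun i _ => ?_
        simp [Equiv.addRight]

lemma trace_pow_walk_zmod {n : Type*} [Fintype n] [DecidableEq n] (M : Matrix n n ℂ)
    (l : ℕ) [NeZero l] :
    Matrix.trace (M ^ l) = ∑ b : ZMod l → n, ∏ i : ZMod l, M (b i) (b (i + 1)) := by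
  obtain ⟨m, rfl⟩ := Nat.exists_eq_succ_of_ne_zero (NeZero.ne l)
  exact trace_pow_walk M m

lemma oexp_sum {E : Type} [Fintype E] [DecidableEq E] {t : ℕ} [NeZero t]
    (F : Finset E) (γ : {e : E // e ∈ F} → ZMod t) {l : ℕ} [NeZero l]
    (b : ZMod l → E × Bool) :
    ∑ i : ZMod l, oexp (extF F γ) (b i)
      = ∑ e : {e : E // e ∈ F}, ((γ e).val : ℤ) * abel b e.1 := by
  have h1 : ∀ a : E × Bool, oexp (extF F γ) a =
      ∑ e : E, if a.1 = e then ((extF F γ e).val : ℤ) * (if a.2 then 1 else -1) else 0 := by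
    intro a
    rw [Finset.sum_ite_eq univ a.1
      (fun e => ((extF F γ e).val : ℤ) * (if a.2 then 1 else -1)), if_pos (mem_univ _)]
    unfold oexp
    split_ifs <;> ring
  simp_rw [h1]
  rw [Finset.sum_comm]
  have h2 : ∀ e : E, (∑ i : ZMod l,
        if (b i).1 = e then ((extF F γ e).val : ℤ) * (if (b i).2 then 1 else -1) else 0)
      = ((extF F γ e).val : ℤ) * abel b e := by
    intro e
    rw [abel, Finset.mul_sum]
    refine Finset.sum_congr rfl fun i _ => ?_
    split_ifs <;> ring
  simp_rw [h2]
  have h3 : ∑ e : E, ((extF F γ e).val : ℤ) * abel b e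
      = ∑ e ∈ F, ((extF F γ e).val : ℤ) * abel b e := by
    refine (Finset.sum_subset (Finset.subset_univ F) fun e _ he => ?_).symm
    rw [extF, dif_neg he, ZMod.val_zero]
    simp
  rw [h3, ← Finset.sum_coe_sort F (fun e => ((extF F γ e).val : ℤ) * abel b e)]
  refine Finset.sum_congr rfl fun e _ => ?_
  congr 2
  rw [extF, dif_pos e.2]

end Aux

set_option maxHeartbeats 1000000 in
theorem stmt7 {V E : Type} [Fintype V] [Fintype E] [DecidableEq V] [DecidableEq E]
    (vs vt : E → V) (t : ℕ) [NeZero t] (ht : 2 ≤ t)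
    (F : Finset E) (α : {e : E // e ∈ F} → ZMod t) (l : ℕ) [NeZero l] :
    (Fintype.card {a : ZMod l → E × Bool // IsCircuit vs vt a ∧
        (fun e : {e : E // e ∈ F} => ((abel a e.1 : ℤ) : ZMod t)) = α} : ℂ) =
      (1 / (t : ℂ) ^ F.card) *
        ∑ γ : {e : E // e ∈ F} → ZMod t,
          zetat t ^ (-(((∑ e : {e : E // e ∈ F}, γ e * α e).val : ℤ))) *
            Matrix.trace ((twistedEdgeAdj vs vt t (extF F γ)) ^ l)  := by
  classical
  have hz := zetat_ne_zero t
  have htne : (t : ℂ) ≠ 0 := Nat.cast_ne_zero.mpr (NeZero.ne t)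
  have htpow : (t : ℂ) ^ F.card ≠ 0 := pow_ne_zero _ htne
  have step1 : ∀ γ : {e : E // e ∈ F} → ZMod t,
      Matrix.trace ((twistedEdgeAdj vs vt t (extF F γ)) ^ l)
        = ∑ b : ZMod l → E × Bool, if IsCircuit vs vt b
            then zetat t ^ (∑ e : {e : E // e ∈ F}, ((γ e).val : ℤ) * abel b e.1) else 0 := by
    intro γ
    rw [trace_pow_walk_zmod]
    refine Finset.sum_congr rfl fun b _ => ?_
    have hA : ∀ i : ZMod l, twistedEdgeAdj vs vt t (extF F γ) (b i) (b (i+1))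
        = if Feeds vs vt (b i) (b (i+1)) then zetat t ^ (oexp (extF F γ) (b i)) else 0 :=
      fun i => rfl
    simp_rw [hA]
    rw [Fintype.prod_ite_zero]
    have hiff : (∀ i, Feeds vs vt (b i) (b (i+1))) ↔ IsCircuit vs vt b :=
      ⟨fun h => ⟨fun i => (h i).2, fun i => (h i).1⟩, fun h i => ⟨h.2 i, h.1 i⟩⟩
    have hprod : (∏ i : ZMod l, zetat t ^ (oexp (extF F γ) (b i)))
        = zetat t ^ (∑ e : {e : E // e ∈ F}, ((γ e).val : ℤ) * abel b e.1) := by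
      rw [← zpow_sum₀ hz univ (fun i => oexp (extF F γ) (b i)), oexp_sum F γ b]
    rw [hprod]
    exact if_congr hiff rfl rfl
  simp_rw [step1]
  have swap : ∑ γ : {e : E // e ∈ F} → ZMod t,
        zetat t ^ (-(((∑ e : {e : E // e ∈ F}, γ e * α e).val : ℤ))) *
        ∑ b : ZMod l → E × Bool, (if IsCircuit vs vt b
          then zetat t ^ (∑ e : {e : E // e ∈ F}, ((γ e).val : ℤ) * abel b e.1) else 0)
      = ∑ b : ZMod l → E × Bool, if IsCircuit vs vt b then
          (∑ γ : {e : E // e ∈ F} → ZMod t,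
            zetat t ^ (-(((∑ e : {e : E // e ∈ F}, γ e * α e).val : ℤ))) *
            zetat t ^ (∑ e : {e : E // e ∈ F}, ((γ e).val : ℤ) * abel b e.1)) else 0 := by
    simp_rw [Finset.mul_sum]
    rw [Finset.sum_comm]
    refine Finset.sum_congr rfl fun b _ => ?_
    by_cases hb : IsCircuit vs vt b <;> simp [hb]
  rw [swap]
  have hchar : ∀ b : ZMod l → E × Bool,
      (∑ γ : {e : E // e ∈ F} → ZMod t,
          zetat t ^ (-(((∑ e : {e : E // e ∈ F}, γ e * α e).val : ℤ))) *
          zetat t ^ (∑ e : {e : E // e ∈ F}, ((γ e).val : ℤ) * abel b e.1))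
      = if (fun e : {e : E // e ∈ F} => ((abel b e.1 : ℤ) : ZMod t)) = α
          then (t : ℂ) ^ F.card else 0 := by
    intro b
    have key : ∀ γ : {e : E // e ∈ F} → ZMod t,
        zetat t ^ (-(((∑ e : {e : E // e ∈ F}, γ e * α e).val : ℤ))) *
          zetat t ^ (∑ e : {e : E // e ∈ F}, ((γ e).val : ℤ) * abel b e.1)
        = ∏ e : {e : E // e ∈ F},
            zetat t ^ (((γ e * (((abel b e.1 : ℤ) : ZMod t) - α e)).val : ℤ)) := by
      intro γ
      rw [← zpow_add₀ hz, ← zpow_sum₀ hz]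
      apply zetat_zpow_congr
      push_cast [ZMod.natCast_val, ZMod.cast_id]
      simp only [mul_sub, Finset.sum_sub_distrib]
      rw [neg_add_eq_sub]
    simp_rw [key]
    rw [← Fintype.prod_sum (fun (e : {e : E // e ∈ F}) (c : ZMod t) =>
      zetat t ^ (((c * (((abel b e.1 : ℤ) : ZMod t) - α e)).val : ℤ)))]
    simp_rw [char_sum]
    rw [Fintype.prod_ite_zero, Finset.prod_const, Finset.card_univ, Fintype.card_coe]
    congr 1
    rw [eq_iff_iff]
    constructor
    · intro h; funext e; exact (sub_eq_zero.mp (h e)).symm ▸ rfl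
    · intro h e
      rw [sub_eq_zero]
      exact congrFun h e
  simp_rw [hchar]
  have hL : (Fintype.card {a : ZMod l → E × Bool // IsCircuit vs vt a ∧
        (fun e : {e : E // e ∈ F} => ((abel a e.1 : ℤ) : ZMod t)) = α} : ℂ)
      = ∑ b : ZMod l → E × Bool, if (IsCircuit vs vt b ∧
          (fun e : {e : E // e ∈ F} => ((abel b e.1 : ℤ) : ZMod t)) = α) then (1 : ℂ) else 0 := by
    rw [Fintype.card_subtype, Finset.card_filter]
    push_cast
    refine Finset.sum_congr rfl fun b _ => ?_
    split_ifs <;> simp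
  rw [hL, Finset.mul_sum]
  refine Finset.sum_congr rfl fun b _ => ?_
  rw [← ite_and]
  split_ifs with h
  · field_simp
  · ring
end

section
/- A connected finite multigraph G is Eulerian if and only if G is bridgeless and the element ρ_T^{-1}(𝟙_T) ∈ H₁(G,ℤ/2ℤ) is the same for all spanning trees T of G. -/
open Finset Matrix

variable {V E : Type}

section EulerAux


set_option linter.unusedSectionVars false

variable [DecidableEq E] {vs vt : E → V}

lemma reach_symm {F : Finset E} {v w : V} (h : Reach vs vt F v w) : Reach vs vt F w v :=
  haveI : Std.Symm (fun v w : V => ∃ e ∈ F, (vs e = v ∧ vt e = w) ∨ (vs e = w ∧ vt e = v)) :=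
    ⟨fun _ _ ⟨e, he, hor⟩ => ⟨e, he, hor.symm⟩⟩
  Std.Symm.symm (r := Relation.ReflTransGen
    (fun v w : V => ∃ e ∈ F, (vs e = v ∧ vt e = w) ∨ (vs e = w ∧ vt e = v))) v w h

lemma reach_mono {F F' : Finset E} (hFF : F ⊆ F') {v w : V} (h : Reach vs vt F v w) :
    Reach vs vt F' v w :=
  Relation.ReflTransGen.mono (fun _ _ ⟨e, he, hor⟩ => ⟨e, hFF he, hor⟩) _ _ h

lemma reach_single {F : Finset E} {e : E} (he : e ∈ F) : Reach vs vt F (vs e) (vt e) :=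
  Relation.ReflTransGen.single ⟨e, he, Or.inl ⟨rfl, rfl⟩⟩

lemma reach_trans {F : Finset E} {u v w : V} (h : Reach vs vt F u v)
    (h' : Reach vs vt F v w) : Reach vs vt F u w :=
  Relation.ReflTransGen.trans h h'

lemma reach_decomp {F : Finset E} (e : E) {v w : V} (h : Reach vs vt F v w) :
    Reach vs vt (F.erase e) v w ∨
      (Reach vs vt (F.erase e) v (vs e) ∧ Reach vs vt (F.erase e) (vt e) w) ∨
      (Reach vs vt (F.erase e) v (vt e) ∧ Reach vs vt (F.erase e) (vs e) w) := by
  induction h with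
  | refl => exact Or.inl Relation.ReflTransGen.refl
  | @tail b c hab hbc ih =>
    obtain ⟨e', he', hor⟩ := hbc
    by_cases hee : e' = e
    · subst hee
      rcases hor with ⟨hx, hy⟩ | ⟨hx, hy⟩
      · subst hx; subst hy
        rcases ih with h1 | ⟨h1, h2⟩ | ⟨h1, h2⟩
        · exact Or.inr (Or.inl ⟨h1, Relation.ReflTransGen.refl⟩)
        · exact Or.inr (Or.inl ⟨h1, Relation.ReflTransGen.refl⟩)
        · exact Or.inl h1
      · subst hx; subst hy
        rcases ih with h1 | ⟨h1, h2⟩ | ⟨h1, h2⟩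
        · exact Or.inr (Or.inr ⟨h1, Relation.ReflTransGen.refl⟩)
        · exact Or.inl h1
        · exact Or.inr (Or.inr ⟨h1, Relation.ReflTransGen.refl⟩)
    · have hstep : Reach vs vt (F.erase e) b c :=
        Relation.ReflTransGen.single ⟨e', Finset.mem_erase.2 ⟨hee, he'⟩, hor⟩
      rcases ih with h1 | ⟨h1, h2⟩ | ⟨h1, h2⟩
      · exact Or.inl (reach_trans h1 hstep)
      · exact Or.inr (Or.inl ⟨h1, reach_trans h2 hstep⟩)
      · exact Or.inr (Or.inr ⟨h1, reach_trans h2 hstep⟩)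

lemma reach_erase_of_reach {F : Finset E} {e : E}
    (hxy : Reach vs vt (F.erase e) (vs e) (vt e)) {v w : V}
    (h : Reach vs vt F v w) : Reach vs vt (F.erase e) v w := by
  rcases reach_decomp e h with h1 | ⟨h1, h2⟩ | ⟨h1, h2⟩
  · exact h1
  · exact reach_trans (reach_trans h1 hxy) h2
  · exact reach_trans (reach_trans h1 (reach_symm hxy)) h2

lemma reach_empty {v w : V} (h : Reach vs vt (∅ : Finset E) v w) : v = w := by
  induction h with
  | refl => rfl
  | tail _ hstep ih => obtain ⟨e, he, _⟩ := hstep; simp at he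

lemma card_reach_le [Fintype V] [Fintype E] :
    ∀ (n : ℕ) (F : Finset E), F.card = n → ∀ v : V,
      {w | Reach vs vt F v w}.ncard ≤ {e' | e' ∈ F ∧ Reach vs vt F v (vs e')}.ncard + 1 := by
  intro n
  induction n with
  | zero =>
    intro F hF v
    rw [Finset.card_eq_zero] at hF
    subst hF
    have : {w | Reach vs vt (∅ : Finset E) v w} = {v} := by
      ext w
      simp only [Set.mem_setOf_eq, Set.mem_singleton_iff]
      exact ⟨fun h => (reach_empty h).symm, fun h => h ▸ Relation.ReflTransGen.refl⟩
    rw [this, Set.ncard_singleton]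
    omega
  | succ n IH =>
    intro F hF v
    have hpos : 0 < F.card := by omega
    obtain ⟨e, he⟩ := Finset.card_pos.mp hpos
    have hF' : (F.erase e).card = n := by rw [Finset.card_erase_of_mem he]; omega
    set F' := F.erase e with hF'def
    by_cases hxy : Reach vs vt F' (vs e) (vt e)
    · have hsets : {w | Reach vs vt F v w} = {w | Reach vs vt F' v w} := by
        ext w
        exact ⟨fun h => reach_erase_of_reach hxy h,
          fun h => reach_mono (Finset.erase_subset _ _) h⟩
      rw [hsets]
      refine le_trans (IH F' hF' v) (Nat.add_le_add_right (Set.ncard_le_ncard ?_ (Set.toFinite _)) 1)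
      rintro e' ⟨h1, h2⟩
      exact ⟨Finset.mem_of_mem_erase h1, reach_mono (Finset.erase_subset _ _) h2⟩
    · have hbig : ∀ z : V, Reach vs vt F v z → ∀ e' ∈ F', Reach vs vt F' z (vs e') →
          e' ∈ {e' | e' ∈ F ∧ Reach vs vt F v (vs e')} := by
        intro z hz e' h1 h2
        exact ⟨Finset.mem_of_mem_erase h1,
          reach_trans hz (reach_mono (Finset.erase_subset _ _) h2)⟩
      by_cases hvx : Reach vs vt F' v (vs e)
      · have hvy : ¬ Reach vs vt F' v (vt e) := fun h =>
          hxy (reach_trans (reach_symm hvx) h)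
        have hsub : {w | Reach vs vt F v w} ⊆
            {w | Reach vs vt F' v w} ∪ {w | Reach vs vt F' (vt e) w} := by
          intro w hw
          rcases reach_decomp e hw with h1 | ⟨h1, h2⟩ | ⟨h1, h2⟩
          · exact Or.inl h1
          · exact Or.inr h2
          · exact absurd h1 hvy
        have hvY : Reach vs vt F v (vt e) :=
          reach_trans (reach_mono (Finset.erase_subset _ _) hvx) (reach_single he)
        have hdisj : Disjoint {e' | e' ∈ F' ∧ Reach vs vt F' v (vs e')}
            {e' | e' ∈ F' ∧ Reach vs vt F' (vt e) (vs e')} := by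
          rw [Set.disjoint_left]
          rintro e' ⟨_, h2⟩ ⟨_, h4⟩
          exact hvy (reach_trans h2 (reach_symm h4))
        have hins : insert e ({e' | e' ∈ F' ∧ Reach vs vt F' v (vs e')} ∪
            {e' | e' ∈ F' ∧ Reach vs vt F' (vt e) (vs e')}) ⊆
            {e' | e' ∈ F ∧ Reach vs vt F v (vs e')} := by
          intro e' h'
          simp only [Set.mem_insert_iff, Set.mem_union, Set.mem_setOf_eq] at h'
          rcases h' with h | h | h
          · subst h; exact ⟨he, reach_mono (Finset.erase_subset _ _) hvx⟩
          · exact hbig v Relation.ReflTransGen.refl e' h.1 h.2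
          · exact hbig (vt e) hvY e' h.1 h.2
        have hnotmem : e ∉ {e' | e' ∈ F' ∧ Reach vs vt F' v (vs e')} ∪
            {e' | e' ∈ F' ∧ Reach vs vt F' (vt e) (vs e')} := by
          intro h'
          simp only [Set.mem_union, Set.mem_setOf_eq] at h'
          rcases h' with h | h <;> exact (Finset.notMem_erase e F) h.1
        have h1 := Set.ncard_le_ncard hsub (Set.toFinite _)
        have h2 := Set.ncard_union_le {w | Reach vs vt F' v w} {w | Reach vs vt F' (vt e) w}
        have h3 := IH F' hF' v
        have h4 := IH F' hF' (vt e)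
        have h5 := Set.ncard_union_eq hdisj (Set.toFinite _) (Set.toFinite _)
        have h6 := Set.ncard_le_ncard hins (Set.toFinite _)
        rw [Set.ncard_insert_of_notMem hnotmem (Set.toFinite _)] at h6
        omega
      · by_cases hvy : Reach vs vt F' v (vt e)
        · have hsub : {w | Reach vs vt F v w} ⊆
              {w | Reach vs vt F' v w} ∪ {w | Reach vs vt F' (vs e) w} := by
            intro w hw
            rcases reach_decomp e hw with h1 | ⟨h1, h2⟩ | ⟨h1, h2⟩
            · exact Or.inl h1
            · exact absurd h1 hvx
            · exact Or.inr h2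
          have hvX : Reach vs vt F v (vs e) :=
            reach_trans (reach_mono (Finset.erase_subset _ _) hvy)
              (reach_symm (reach_single he))
          have hdisj : Disjoint {e' | e' ∈ F' ∧ Reach vs vt F' v (vs e')}
              {e' | e' ∈ F' ∧ Reach vs vt F' (vs e) (vs e')} := by
            rw [Set.disjoint_left]
            rintro e' ⟨_, h2⟩ ⟨_, h4⟩
            exact hvx (reach_trans h2 (reach_symm h4))
          have hins : insert e ({e' | e' ∈ F' ∧ Reach vs vt F' v (vs e')} ∪
              {e' | e' ∈ F' ∧ Reach vs vt F' (vs e) (vs e')}) ⊆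
              {e' | e' ∈ F ∧ Reach vs vt F v (vs e')} := by
            intro e' h'
            simp only [Set.mem_insert_iff, Set.mem_union, Set.mem_setOf_eq] at h'
            rcases h' with h | h | h
            · subst h; exact ⟨he, hvX⟩
            · exact hbig v Relation.ReflTransGen.refl e' h.1 h.2
            · exact hbig (vs e) hvX e' h.1 h.2
          have hnotmem : e ∉ {e' | e' ∈ F' ∧ Reach vs vt F' v (vs e')} ∪
              {e' | e' ∈ F' ∧ Reach vs vt F' (vs e) (vs e')} := by
            intro h'
            simp only [Set.mem_union, Set.mem_setOf_eq] at h'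
            rcases h' with h | h <;> exact (Finset.notMem_erase e F) h.1
          have h1 := Set.ncard_le_ncard hsub (Set.toFinite _)
          have h2 := Set.ncard_union_le {w | Reach vs vt F' v w} {w | Reach vs vt F' (vs e) w}
          have h3 := IH F' hF' v
          have h4 := IH F' hF' (vs e)
          have h5 := Set.ncard_union_eq hdisj (Set.toFinite _) (Set.toFinite _)
          have h6 := Set.ncard_le_ncard hins (Set.toFinite _)
          rw [Set.ncard_insert_of_notMem hnotmem (Set.toFinite _)] at h6
          omega
        · have hsets : {w | Reach vs vt F v w} = {w | Reach vs vt F' v w} := by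
            ext w
            refine ⟨fun h => ?_, fun h => reach_mono (Finset.erase_subset _ _) h⟩
            rcases reach_decomp e h with h1 | ⟨h1, h2⟩ | ⟨h1, h2⟩
            · exact h1
            · exact absurd h1 hvx
            · exact absurd h1 hvy
          rw [hsets]
          refine le_trans (IH F' hF' v)
            (Nat.add_le_add_right (Set.ncard_le_ncard ?_ (Set.toFinite _)) 1)
          rintro e' ⟨h1, h2⟩
          exact ⟨Finset.mem_of_mem_erase h1, reach_mono (Finset.erase_subset _ _) h2⟩

lemma reach_of_edge {F : Finset E} {e : E} (he : e ∈ F) {a b : V}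
    (h : (vs e = a ∧ vt e = b) ∨ (vs e = b ∧ vt e = a)) : Reach vs vt F a b :=
  Relation.ReflTransGen.single ⟨e, he, h⟩

lemma exists_min :
    ∀ (n : ℕ) (F : Finset E), F.card ≤ n → (∀ v w, Reach vs vt F v w) →
      ∃ T ⊆ F, (∀ v w, Reach vs vt T v w) ∧
        ∀ e ∈ T, ¬ Reach vs vt (T.erase e) (vs e) (vt e) := by
  intro n
  induction n with
  | zero =>
    intro F hF hconn
    refine ⟨F, subset_rfl, hconn, fun e he => ?_⟩
    rw [Finset.card_eq_zero.mp (Nat.le_zero.mp hF)] at he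
    simp at he
  | succ n IH =>
    intro F hF hconn
    by_cases h : ∃ e ∈ F, Reach vs vt (F.erase e) (vs e) (vt e)
    · obtain ⟨e, he, hxy⟩ := h
      have hconn' : ∀ v w, Reach vs vt (F.erase e) v w := fun v w =>
        reach_erase_of_reach hxy (hconn v w)
      have hcard : (F.erase e).card ≤ n := by
        rw [Finset.card_erase_of_mem he]
        have := Finset.card_pos.mpr ⟨e, he⟩
        omega
      obtain ⟨T, hT, a, b⟩ := IH _ hcard hconn'
      exact ⟨T, hT.trans (Finset.erase_subset _ _), a, b⟩
    · push_neg at h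
      exact ⟨F, subset_rfl, hconn, h⟩

lemma indep_card_le [Fintype V] [Fintype E] (T : Finset E)
    (hconn : ∀ v w, Reach vs vt T v w)
    (hind : ∀ e ∈ T, ¬ Reach vs vt (T.erase e) (vs e) (vt e)) (v₀ : V) :
    T.card + 1 ≤ Fintype.card V := by
  classical
  have key : ∀ e : {e // e ∈ T}, ∃ u p : V,
      ((vs e.1 = p ∧ vt e.1 = u) ∨ (vs e.1 = u ∧ vt e.1 = p)) ∧
      Reach vs vt (T.erase e.1) v₀ p ∧ ¬ Reach vs vt (T.erase e.1) v₀ u := by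
    rintro ⟨e, he⟩
    have hx : Reach vs vt (T.erase e) v₀ (vs e) ∨ Reach vs vt (T.erase e) v₀ (vt e) := by
      rcases reach_decomp e (hconn v₀ (vs e)) with h1 | ⟨h1, _⟩ | ⟨h1, _⟩
      · exact Or.inl h1
      · exact Or.inl h1
      · exact Or.inr h1
    by_cases hvx : Reach vs vt (T.erase e) v₀ (vs e)
    · exact ⟨vt e, vs e, Or.inl ⟨rfl, rfl⟩, hvx, fun h =>
        hind e he (reach_trans (reach_symm hvx) h)⟩
    · exact ⟨vs e, vt e, Or.inr ⟨rfl, rfl⟩, hx.resolve_left hvx, hvx⟩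
  choose g p hedge hp hu using key
  have hginj : Function.Injective g := by
    intro e e' hgg
    by_contra hne
    have hne' : e.1 ≠ e'.1 := fun h => hne (Subtype.ext h)
    have hsub1 : (T.erase e.1).erase e'.1 ⊆ T.erase e'.1 := by
      rw [Finset.erase_right_comm]
      exact Finset.erase_subset _ _
    have hsub2 : (T.erase e.1).erase e'.1 ⊆ T.erase e.1 := Finset.erase_subset _ _
    have he'' : e.1 ∈ T.erase e'.1 := Finset.mem_erase.2 ⟨hne', e.2⟩
    rcases reach_decomp e'.1 (hp e) with h1 | ⟨h1, h2⟩ | ⟨h1, h2⟩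
    · -- reach v₀ → p e avoiding both, then step edge e to g e = g e'
      refine hu e' ?_
      rw [← hgg]
      exact reach_trans (reach_mono hsub1 h1) (reach_of_edge he'' (hedge e))
    · rcases hedge e' with ⟨h3, h4⟩ | ⟨h3, h4⟩
      · -- vt e' = g e' = g e ; h2 : Reach F'' (vt e') (p e)
        refine hind e.1 e.2 ?_
        have h5 : Reach vs vt (T.erase e.1) (g e) (p e) := by
          rw [hgg, ← h4]
          exact reach_mono hsub2 h2
        rcases hedge e with ⟨h6, h7⟩ | ⟨h6, h7⟩
        · rw [h6, h7]; exact reach_symm h5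
        · rw [h6, h7]; exact h5
      · -- vs e' = g e' ; h1 : Reach F'' v₀ (vs e')
        refine hu e' ?_
        rw [← h3]
        exact reach_mono hsub1 h1
    · rcases hedge e' with ⟨h3, h4⟩ | ⟨h3, h4⟩
      · -- vt e' = g e' ; h1 : Reach F'' v₀ (vt e')
        refine hu e' ?_
        rw [← h4]
        exact reach_mono hsub1 h1
      · -- vs e' = g e' = g e ; h2 : Reach F'' (vs e') (p e)
        refine hind e.1 e.2 ?_
        have h5 : Reach vs vt (T.erase e.1) (g e) (p e) := by
          rw [hgg, ← h3]
          exact reach_mono hsub2 h2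
        rcases hedge e with ⟨h6, h7⟩ | ⟨h6, h7⟩
        · rw [h6, h7]; exact reach_symm h5
        · rw [h6, h7]; exact h5
  have hmap : Function.Injective (fun e : {e // e ∈ T} =>
      (⟨g e, fun h => hu e (h ▸ Relation.ReflTransGen.refl)⟩ : {v : V // v ≠ v₀})) := by
    intro e e' h
    exact hginj (congrArg Subtype.val h)
  have hcard := Fintype.card_le_of_injective _ hmap
  rw [Fintype.card_coe] at hcard
  have h1 : Fintype.card {v : V // v ≠ v₀} = Fintype.card V - 1 := by
    rw [Fintype.card_subtype_compl, Fintype.card_subtype_eq]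
  have h2 : 0 < Fintype.card V := Fintype.card_pos_iff.2 ⟨v₀⟩
  omega

lemma spanning_tree_avoiding [Fintype V] [Fintype E] (v₀ : V) (F : Finset E)
    (hconn : ∀ v w, Reach vs vt F v w) : ∃ T ⊆ F, IsSpanningTree vs vt T := by
  obtain ⟨T, hTF, hTconn, hind⟩ := exists_min F.card F le_rfl hconn
  have h1 := indep_card_le T hTconn hind v₀
  have h2 := card_reach_le (vs := vs) (vt := vt) T.card T rfl v₀
  have huniv : {w | Reach vs vt T v₀ w} = Set.univ :=
    Set.eq_univ_of_forall (fun w => hTconn v₀ w)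
  rw [huniv, Set.ncard_univ, Nat.card_eq_fintype_card] at h2
  have h3 : {e' | e' ∈ T ∧ Reach vs vt T v₀ (vs e')}.ncard ≤ T.card := by
    have hsubT : {e' | e' ∈ T ∧ Reach vs vt T v₀ (vs e')} ⊆ (↑T : Set E) := fun e h => h.1
    have := Set.ncard_le_ncard hsubT (Set.toFinite _)
    rwa [Set.ncard_coe_finset] at this
  exact ⟨T, hTF, hTconn, by omega⟩

lemma cast2_eq_iff {m n : ℕ} : ((m : ZMod 2) = (n : ZMod 2)) ↔ Even (m + n) := by
  have h : ((m + n : ℕ) : ZMod 2) = 0 ↔ Even (m + n) := by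
    rw [ZMod.natCast_eq_zero_iff]
    exact ⟨fun h => even_iff_two_dvd.2 h, fun h => even_iff_two_dvd.1 h⟩
  rw [← h]
  push_cast
  constructor
  · intro h'; rw [h']; exact CharTwo.add_self_eq_zero _
  · intro h'
    have := eq_neg_of_add_eq_zero_left h'
    rwa [CharTwo.neg_eq] at this

lemma sum_one_zmod2 (s : Finset E) : (∑ _e ∈ s, (1 : ZMod 2)) = (s.card : ZMod 2) := by
  simp

lemma even_degree_iff [Fintype V] [Fintype E] [DecidableEq V] {v : V} :
    (((univ.filter fun e => vs e = v).card : ZMod 2) =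
      ((univ.filter fun e => vt e = v).card : ZMod 2)) ↔ Even (degree vs vt v) :=
  cast2_eq_iff

lemma bridgeless_of_even [Fintype V] [Fintype E] [DecidableEq V]
    (heven : ∀ v, Even (degree vs vt v))
    (hconn : ∀ v w : V, Reach vs vt Finset.univ v w) (e : E) (v w : V) :
    Reach vs vt (Finset.univ.erase e) v w := by
  classical
  set F' := (univ : Finset E).erase e with hF'
  set S : Finset V := univ.filter (fun z => Reach vs vt F' (vs e) z) with hS
  have hmemS : ∀ z, z ∈ S ↔ Reach vs vt F' (vs e) z := by intro z; simp [hS]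
  have hclosed : ∀ e' ∈ F', ((vs e' ∈ S) ↔ (vt e' ∈ S)) := by
    intro e' he'
    rw [hmemS, hmemS]
    exact ⟨fun h => reach_trans h (reach_single he'),
      fun h => reach_trans h (reach_symm (reach_single he'))⟩
  have hswap : (∑ v ∈ S, (degree vs vt v : ZMod 2)) =
      ∑ e' : E, ((if vs e' ∈ S then 1 else 0) + (if vt e' ∈ S then 1 else 0) : ZMod 2) := by
    calc ∑ v ∈ S, (degree vs vt v : ZMod 2)
        = ∑ v ∈ S, ((∑ e' : E, if vs e' = v then (1 : ZMod 2) else 0) +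
            (∑ e' : E, if vt e' = v then (1 : ZMod 2) else 0)) := by
          refine Finset.sum_congr rfl fun v _ => ?_
          simp only [degree, Finset.card_filter, Nat.cast_add, Nat.cast_sum, Nat.cast_ite,
            Nat.cast_one, Nat.cast_zero]
      _ = ∑ e' : E, ((if vs e' ∈ S then (1 : ZMod 2) else 0) +
            (if vt e' ∈ S then (1 : ZMod 2) else 0)) := by
          rw [Finset.sum_add_distrib, Finset.sum_add_distrib,
            Finset.sum_comm (s := S), Finset.sum_comm (s := S)]
          refine congrArg₂ (· + ·) ?_ ?_ <;>
            exact Finset.sum_congr rfl fun e' _ => Finset.sum_ite_eq S _ _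
  have hkey : ∑ e' : E, ((if vs e' ∈ S then 1 else 0) + (if vt e' ∈ S then 1 else 0) : ZMod 2)
      = 0 := by
    rw [← hswap]
    apply Finset.sum_eq_zero
    intro v _
    exact (ZMod.natCast_eq_zero_iff _ _).2 (even_iff_two_dvd.1 (heven v))
  have hx : vs e ∈ S := (hmemS _).2 Relation.ReflTransGen.refl
  have hsplit : ((if vs e ∈ S then (1 : ZMod 2) else 0) + (if vt e ∈ S then 1 else 0)) = 0 := by
    have hz : ∑ e' ∈ univ.erase e,
        ((if vs e' ∈ S then (1 : ZMod 2) else 0) + (if vt e' ∈ S then 1 else 0)) = 0 := by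
      apply Finset.sum_eq_zero
      intro e' he'
      by_cases h : vs e' ∈ S
      · rw [if_pos h, if_pos ((hclosed e' he').1 h)]
        exact CharTwo.add_self_eq_zero _
      · rw [if_neg h, if_neg (fun h' => h ((hclosed e' he').2 h'))]
        simp
    have htot := Finset.add_sum_erase univ
      (fun e' => ((if vs e' ∈ S then (1 : ZMod 2) else 0) + (if vt e' ∈ S then 1 else 0)))
      (Finset.mem_univ e)
    rw [hz, add_zero] at htot
    rw [htot]
    simpa using hkey
  have hy : vt e ∈ S := by
    by_contra hy
    rw [if_pos hx, if_neg hy, add_zero] at hsplit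
    exact one_ne_zero hsplit
  exact reach_erase_of_reach ((hmemS _).1 hy) (hconn v w)


end EulerAux

theorem stmt12 {V E : Type} [Fintype V] [Fintype E] [DecidableEq V] [DecidableEq E]
    (vs vt : E → V) (hconn : ∀ v w : V, Reach vs vt Finset.univ v w) :
    (∀ v, Even (degree vs vt v)) ↔
      ((∀ e : E, ∀ v w : V, Reach vs vt (Finset.univ.erase e) v w) ∧
        ∃ α : E → ZMod 2, IsCirc vs vt α ∧
          ∀ T : Finset E, IsSpanningTree vs vt T → ∀ e ∉ T, α e = 1) := by
  constructor
  · intro heven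
    refine ⟨fun e v w => bridgeless_of_even heven hconn e v w, fun _ => 1, ?_,
      fun T _ e _ => rfl⟩
    intro v
    rw [sum_one_zmod2, sum_one_zmod2]
    exact even_degree_iff.mpr (heven v)
  · rintro ⟨hbridge, α, hcirc, hα⟩
    have hα1 : ∀ e, α e = 1 := by
      intro e
      obtain ⟨T, hTsub, hTtree⟩ := spanning_tree_avoiding (vs e) (univ.erase e) (hbridge e)
      exact hα T hTtree e (fun heT => (Finset.notMem_erase e univ) (hTsub heT))
    intro v
    have h := hcirc v
    rw [Finset.sum_congr rfl (fun e _ => hα1 e), Finset.sum_congr rfl (fun e _ => hα1 e),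
      sum_one_zmod2, sum_one_zmod2] at h
    exact even_degree_iff.mp h
end

section
/- Let G be a connected graph with spanning tree T and canonical element γ_T ∈ M₂(E^c(T)). Then the graph G' obtained from G by deleting the edges in supp(γ_T) is the maximal bipartite subgraph of G containing T: G' is bipartite, and any bipartite subgraph of G containing all edges of T is a subgraph of G'. -/
open Finset Matrix

variable {V E : Type}

theorem stmt16 {V E : Type} [Fintype V] [Fintype E] [DecidableEq V] [DecidableEq E]
    (vs vt : E → V) (T : Finset E) (hT : IsSpanningTree vs vt T)
    (c : V → ZMod 2) (hc : ∀ e ∈ T, c (vs e) ≠ c (vt e)) :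
    (∃ b : V → ZMod 2, ∀ e ∈ Finset.univ.filter
        (fun e : E => e ∈ T ∨ c (vs e) ≠ c (vt e)), b (vs e) ≠ b (vt e)) ∧
      ∀ F : Finset E, T ⊆ F → (∃ b : V → ZMod 2, ∀ e ∈ F, b (vs e) ≠ b (vt e)) →
        F ⊆ Finset.univ.filter (fun e : E => e ∈ T ∨ c (vs e) ≠ c (vt e)) := by
  constructor
  · refine ⟨c, fun e he => ?_⟩
    simp only [Finset.mem_filter] at he
    rcases he.2 with h | h
    · exact hc e h
    · exact h
  · rintro F hTF ⟨b, hb⟩ e heF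
    simp only [Finset.mem_filter, Finset.mem_univ, true_and]
    by_cases heT : e ∈ T
    · exact Or.inl heT
    right
    have flip : ∀ x y : ZMod 2, x ≠ y → x = y + 1 := by decide
    have key : ∀ v w, Reach vs vt T v w → b v + c v = b w + c w := by
      intro v w h
      induction h with
      | refl => rfl
      | tail hrt hstep ih =>
        obtain ⟨e', he'T, h'⟩ := hstep
        have hbe := flip _ _ (hb e' (hTF he'T))
        have hce := flip _ _ (hc e' he'T)
        have two : ∀ x y : ZMod 2, (x + 1) + (y + 1) = x + y := by decide
        rcases h' with ⟨h1, h2⟩ | ⟨h1, h2⟩ <;> subst h1 <;> subst h2 <;>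
          rw [ih, hbe, hce] <;> [exact two _ _; exact (two _ _).symm]
    intro hcc
    have hk := key (vs e) (vt e) (hT.1 (vs e) (vt e))
    rw [hcc] at hk
    exact hb e heF (by exact add_right_cancel hk)
end

section
/- Let G be an Eulerian graph (every vertex has even degree) with m edges, T a spanning tree, and γ_T the canonical element of M₂(E^c(T)). Then |supp(γ_T)| ≡ m (mod 2). -/
open Finset Matrix

variable {V E : Type}

theorem stmt17 {V E : Type} [Fintype V] [Fintype E] [DecidableEq V] [DecidableEq E]
    (vs vt : E → V) (hEul : ∀ v, Even (degree vs vt v))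
    (T : Finset E) (hT : IsSpanningTree vs vt T)
    (c : V → ZMod 2) (hc : ∀ e ∈ T, c (vs e) ≠ c (vt e)) :
    (Finset.univ.filter fun e : E => e ∉ T ∧ c (vs e) = c (vt e)).card ≡
      Fintype.card E [MOD 2] := by
  rw [← ZMod.natCast_eq_natCast_iff]
  have hne : ∀ a b : ZMod 2, a ≠ b → a + b + 1 = 0 := by decide
  have heq : ∀ a b : ZMod 2, a = b → a + b + 1 = 1 := by decide
  have h1 : ((univ.filter fun e : E => e ∉ T ∧ c (vs e) = c (vt e)).card : ZMod 2)
      = ∑ e : E, (c (vs e) + c (vt e) + 1) := by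
    rw [Finset.card_filter, Nat.cast_sum]
    refine Finset.sum_congr rfl fun e _ => ?_
    by_cases hTe : e ∈ T
    · simp [hTe, hne _ _ (hc e hTe)]
    · by_cases hm : c (vs e) = c (vt e)
      · simp [hTe, hm, CharTwo.add_self_eq_zero]
      · simp [hTe, hm, hne _ _ hm]
  have hfib : ∀ f : E → V, ∑ e : E, c (f e)
      = ∑ v : V, ((univ.filter fun e => f e = v).card : ZMod 2) * c v := by
    intro f
    rw [← Finset.sum_fiberwise Finset.univ f (fun e => c (f e))]
    refine Finset.sum_congr rfl fun v _ => ?_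
    rw [Finset.sum_congr rfl (fun e he => by
      rw [(Finset.mem_filter.mp he).2]), Finset.sum_const, nsmul_eq_mul]
  have h2 : ∑ e : E, (c (vs e) + c (vt e) + 1)
      = (∑ v : V, ((degree vs vt v : ℕ) : ZMod 2) * c v) + (Fintype.card E : ZMod 2) := by
    rw [Finset.sum_add_distrib, Finset.sum_add_distrib, hfib vs, hfib vt,
      ← Finset.sum_add_distrib]
    simp only [Finset.sum_const, Finset.card_univ, nsmul_eq_mul, mul_one]
    congr 1
    refine Finset.sum_congr rfl fun v _ => ?_
    rw [degree, Nat.cast_add, add_mul]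
  have h3 : ∀ v : V, ((degree vs vt v : ℕ) : ZMod 2) = 0 := fun v =>
    (ZMod.natCast_eq_zero_iff _ 2).mpr (hEul v).two_dvd
  rw [h1, h2]
  simp [h3]
end
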